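/- Let ρ, ρ₁, …, ρₙ (n ≥ 2) be d×d density matrices and p₁, …, pₙ real numbers with 0 < pₖ < 1 for each k, ∑ₖ pₖ = 1 and ρ = ∑ₖ pₖ ρₖ. For each k set Gₖ = (1 - pₖ) · C_{l1}((ρ - pₖ ρₖ)/(1 - pₖ)). Then (1/n) ∑ₖ [Gₖ + pₖ C_{l1}(ρₖ)] ≤ ∑ₖ pₖ C_{l1}(ρₖ); that is, the upper bound (1/n) ∑ₖ [Gₖ + pₖ C_{l1}(ρₖ)] on C_{l1}(ρ) is at most the convexity upper bound ∑ₖ pₖ C_{l1}(ρₖ). -/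

import Mathlib

open Matrix BigOperators
open scoped ComplexOrder

/-- The l1-norm of coherence: sum of absolute values of all off-diagonal entries. -/
noncomputable def Cl1 {d : ℕ} (ρ : Matrix (Fin d) (Fin d) ℂ) : ℝ :=
  ∑ i, ∑ j, if i ≠ j then ‖ρ i j‖ else 0

/-- A density matrix: positive semidefinite with trace 1. -/
def IsDensityMatrix {d : ℕ} (ρ : Matrix (Fin d) (Fin d) ℂ) : Prop :=
  ρ.PosSemidef ∧ ρ.trace = 1

/-- Rank-one outer product |ψ⟩⟨ψ|. -/
noncomputable def outer {d : ℕ} (ψ : Fin d → ℂ) : Matrix (Fin d) (Fin d) ℂ :=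
  Matrix.of fun i j => ψ i * (starRingEnd ℂ) (ψ j)

/-- ψ is a unit vector in ℂ^d. -/
def IsUnitVec {d : ℕ} (ψ : Fin d → ℂ) : Prop :=
  ∑ i, Complex.normSq (ψ i) = 1

/-- The convex-roof l1-norm of coherence. -/
noncomputable def convexRoofCl1 {d : ℕ} (ρ : Matrix (Fin d) (Fin d) ℂ) : ℝ :=
  sInf { c : ℝ | ∃ (n : ℕ) (p : Fin n → ℝ) (ψ : Fin n → Fin d → ℂ),
    (∀ i, 0 ≤ p i) ∧ (∑ i, p i) = 1 ∧ (∀ i, IsUnitVec (ψ i)) ∧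
    ρ = ∑ i, p i • outer (ψ i) ∧
    c = ∑ i, p i * Cl1 (outer (ψ i)) }

lemma Cl1_nonneg {d : ℕ} (A : Matrix (Fin d) (Fin d) ℂ) : 0 ≤ Cl1 A := by
  apply Finset.sum_nonneg; intro i _
  apply Finset.sum_nonneg; intro j _
  split <;> positivity

lemma Cl1_smul {d : ℕ} (c : ℝ) (hc : 0 ≤ c) (A : Matrix (Fin d) (Fin d) ℂ) :
    Cl1 (c • A) = c * Cl1 A := by
  unfold Cl1
  rw [Finset.mul_sum]
  refine Finset.sum_congr rfl fun i _ => ?_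
  rw [Finset.mul_sum]
  refine Finset.sum_congr rfl fun j _ => ?_
  split
  · simp [Matrix.smul_apply, Complex.real_smul, norm_mul, Complex.norm_real, abs_of_nonneg hc]
  · simp

lemma Cl1_sum_le {d : ℕ} {s : Finset (Fin d → Fin d → ℂ)} : True := trivial

lemma Cl1_sum_smul_le {d n : ℕ} (s : Finset (Fin n)) (p : Fin n → ℝ)
    (hp : ∀ k, 0 ≤ p k) (A : Fin n → Matrix (Fin d) (Fin d) ℂ) :
    Cl1 (∑ k ∈ s, p k • A k) ≤ ∑ k ∈ s, p k * Cl1 (A k) := by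
  classical
  have h : ∀ i j : Fin d, (if i ≠ j then ‖(∑ k ∈ s, p k • A k) i j‖ else 0)
      ≤ ∑ k ∈ s, (if i ≠ j then p k * ‖A k i j‖ else 0) := by
    intro i j
    rcases eq_or_ne i j with h | h
    · simp [h]
    · simp only [if_pos h]
      calc ‖(∑ k ∈ s, p k • A k) i j‖
          = ‖∑ k ∈ s, (p k : ℂ) * A k i j‖ := by
            congr 1
            simp [Matrix.sum_apply, Matrix.smul_apply, Complex.real_smul]
        _ ≤ ∑ k ∈ s, ‖(p k : ℂ) * A k i j‖ := norm_sum_le _ _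
        _ = ∑ k ∈ s, p k * ‖A k i j‖ := by
            refine Finset.sum_congr rfl fun k _ => ?_
            rw [norm_mul, Complex.norm_real, Real.norm_eq_abs, abs_of_nonneg (hp k)]
  calc Cl1 (∑ k ∈ s, p k • A k)
      ≤ ∑ i : Fin d, ∑ j : Fin d, ∑ k ∈ s,
          (if i ≠ j then p k * ‖A k i j‖ else 0) :=
        Finset.sum_le_sum fun i _ => Finset.sum_le_sum fun j _ => h i j
    _ = ∑ k ∈ s, p k * Cl1 (A k) := by
        unfold Cl1
        simp_rw [Finset.mul_sum, mul_ite, mul_zero]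
        rw [Finset.sum_congr rfl fun (i : Fin d) _ =>
          Finset.sum_comm (s := (Finset.univ : Finset (Fin d))) (t := s)
            (f := fun j k => if i ≠ j then p k * ‖A k i j‖ else 0)]
        exact Finset.sum_comm

/-- Theorem 2, Eq.(4): the new upper bound is at most the convexity upper bound. -/
theorem upper_bound_comparison {d n : ℕ} (hn : 2 ≤ n)
    (ρ : Matrix (Fin d) (Fin d) ℂ) (ρs : Fin n → Matrix (Fin d) (Fin d) ℂ)
    (p : Fin n → ℝ)
    (hρ : IsDensityMatrix ρ) (hρs : ∀ k, IsDensityMatrix (ρs k))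
    (hp : ∀ k, 0 < p k ∧ p k < 1) (hsum : ∑ k, p k = 1)
    (hmix : ρ = ∑ k, p k • ρs k)
    (G : Fin n → ℝ)
    (hG : ∀ k, G k = (1 - p k) * Cl1 ((1 - p k)⁻¹ • (ρ - p k • ρs k))) :
    (1 / (n : ℝ)) * ∑ k, (G k + p k * Cl1 (ρs k)) ≤ ∑ k, p k * Cl1 (ρs k) := by
  set S := ∑ k, p k * Cl1 (ρs k) with hS
  have hn0 : (0 : ℝ) < n := by positivity
  have key : ∀ k, G k + p k * Cl1 (ρs k) ≤ S := by
    intro k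
    have h1k : (0 : ℝ) < 1 - p k := by linarith [(hp k).2]
    have hdiff : ρ - p k • ρs k = ∑ j ∈ Finset.univ.erase k, p j • ρs j := by
      rw [hmix, ← Finset.add_sum_erase _ _ (Finset.mem_univ k)]
      abel
    have hGk : G k = Cl1 (ρ - p k • ρs k) := by
      rw [hG k, Cl1_smul _ (le_of_lt (inv_pos.mpr h1k)), ← mul_assoc,
        mul_inv_cancel₀ (ne_of_gt h1k), one_mul]
    have hle : Cl1 (ρ - p k • ρs k) ≤ ∑ j ∈ Finset.univ.erase k, p j * Cl1 (ρs j) := by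
      rw [hdiff]
      exact Cl1_sum_smul_le _ _ (fun j => (hp j).1.le) _
    have : S = p k * Cl1 (ρs k) + ∑ j ∈ Finset.univ.erase k, p j * Cl1 (ρs j) := by
      rw [hS, ← Finset.add_sum_erase _ _ (Finset.mem_univ k)]
    rw [hGk]
    linarith
  have hsum_le : ∑ k, (G k + p k * Cl1 (ρs k)) ≤ (n : ℝ) * S := by
    calc ∑ k, (G k + p k * Cl1 (ρs k)) ≤ ∑ _k : Fin n, S :=
          Finset.sum_le_sum fun k _ => key k
      _ = (n : ℝ) * S := by simp [Finset.sum_const, nsmul_eq_mul]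
  calc (1 / (n : ℝ)) * ∑ k, (G k + p k * Cl1 (ρs k))
      ≤ (1 / (n : ℝ)) * ((n : ℝ) * S) := by
        apply mul_le_mul_of_nonneg_left hsum_le (by positivity)
    _ = S := by field_simp
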